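/- Let a ∈ ℝ^n, let p ∈ [1,∞] and q ∈ [1,∞] with 1/p + 1/q = 1, and assume the residue ρ(a) belongs to L^p(Ω,μ) and K_q(Γ) < ∞. Then E‖β − a‖₂ ≤ √n · m · √(K_q(Γ)) · ‖ρ(a)‖_{L^p(Ω)}. -/

import Mathlib

open MeasureTheory ProbabilityTheory ENNReal Matrix Filter

noncomputable section

/-- The smallest eigenvalue `s₁(A)` of the symmetric positive semidefinite matrix `AᵀA`. -/
def s1 {m n : ℕ} (A : Matrix (Fin m) (Fin n) ℝ) : ℝ :=
  ⨅ i, (show (Aᵀ * A).IsHermitian by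
    simpa [Matrix.conjTranspose_eq_transpose_of_trivial] using
      Matrix.isHermitian_conjTranspose_mul_self A).eigenvalues i

/-- Euclidean norm on `ℝ^n`. -/
def enorm2 {n : ℕ} (v : Fin n → ℝ) : ℝ := Real.sqrt (∑ j, v j ^ 2)

/-- The matrix `Γ(x)` with entries `Γ(x)_{ij} = γ_j(x⁽ⁱ⁾)`. -/
def dmat {Ω : Type*} {n m : ℕ} (γ : Fin n → Ω → ℝ) (x : Fin m → Ω) :
    Matrix (Fin m) (Fin n) ℝ := Matrix.of fun i j => γ j (x i)

/-- The matrix `R(x) = (Γ(x)ᵀΓ(x))⁻¹Γ(x)ᵀ`. -/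
def Rmat {Ω : Type*} {n m : ℕ} (γ : Fin n → Ω → ℝ) (x : Fin m → Ω) :
    Matrix (Fin n) (Fin m) ℝ := ((dmat γ x)ᵀ * dmat γ x)⁻¹ * (dmat γ x)ᵀ

/-- `β(x) = R(x) F(x)` where `F(x)_i = f(x⁽ⁱ⁾)`. -/
def betaFn {Ω : Type*} {n m : ℕ} (γ : Fin n → Ω → ℝ) (f : Ω → ℝ) (x : Fin m → Ω) :
    Fin n → ℝ := Rmat γ x *ᵥ fun i => f (x i)

/-- The residue `ρ(a)(ω) = f(ω) - ∑ j a_j γ_j(ω)`. -/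
def resid {Ω : Type*} {n : ℕ} (γ : Fin n → Ω → ℝ) (f : Ω → ℝ) (a : Fin n → ℝ) : Ω → ℝ :=
  fun ω => f ω - ∑ j, a j * γ j ω

lemma Matrix.isHermitian_transpose_mul_self {m n : ℕ} (A : Matrix (Fin m) (Fin n) ℝ) :
    (Aᵀ * A).IsHermitian := by
  simpa [Matrix.conjTranspose_eq_transpose_of_trivial] using
    Matrix.isHermitian_conjTranspose_mul_self A
lemma quad_lower {k : ℕ} {M : Matrix (Fin k) (Fin k) ℝ} (hM : M.IsHermitian) (w : Fin k → ℝ) :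
    (⨅ i, hM.eigenvalues i) * (w ⬝ᵥ w) ≤ w ⬝ᵥ (M *ᵥ w) := by
  classical
  set V : Matrix (Fin k) (Fin k) ℝ := (hM.eigenvectorUnitary : Matrix (Fin k) (Fin k) ℝ) with hV
  have hVs : V * star V = 1 := Matrix.mem_unitaryGroup_iff.mp hM.eigenvectorUnitary.2
  set c : Fin k → ℝ := star V *ᵥ w with hc
  have hkey : ∀ y : Fin k → ℝ, w ⬝ᵥ (V *ᵥ y) = c ⬝ᵥ y := by
    intro y
    rw [dotProduct_mulVec]
    congr 1
    rw [hc, Matrix.star_eq_conjTranspose, Matrix.conjTranspose_eq_transpose_of_trivial,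
      ← Matrix.vecMul_transpose, Matrix.transpose_transpose]
  have hw : V *ᵥ c = w := by rw [hc, Matrix.mulVec_mulVec, hVs, Matrix.one_mulVec]
  have h1 : w ⬝ᵥ (M *ᵥ w) = ∑ i, c i * (hM.eigenvalues i * c i) := by
    conv_lhs => rw [hM.spectral_theorem]
    rw [Unitary.conjStarAlgAut_apply, ← hV, ← Matrix.mulVec_mulVec, ← Matrix.mulVec_mulVec, ← hc, hkey]
    simp [dotProduct, Matrix.mulVec_diagonal, RCLike.ofReal_real_eq_id]
  have h2 : w ⬝ᵥ w = ∑ i, c i * c i := by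
    have h4 : w ⬝ᵥ w = w ⬝ᵥ (V *ᵥ c) := by rw [hw]
    rw [h4, hkey]
    rfl
  rw [h1, h2, Finset.mul_sum]
  refine Finset.sum_le_sum fun i _ => ?_
  have h3 : (⨅ j, hM.eigenvalues j) ≤ hM.eigenvalues i :=
    ciInf_le (Set.Finite.bddBelow (Set.finite_range _)) i
  calc (⨅ j, hM.eigenvalues j) * (c i * c i) ≤ hM.eigenvalues i * (c i * c i) :=
        mul_le_mul_of_nonneg_right h3 (mul_self_nonneg _)
    _ = c i * (hM.eigenvalues i * c i) := by ring

lemma iInf_attained {k : ℕ} (hk : 0 < k) (ev : Fin k → ℝ) : ∃ i₀, (⨅ i, ev i) = ev i₀ ∧ ∀ i, ev i₀ ≤ ev i := by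
  haveI : Nonempty (Fin k) := ⟨⟨0, hk⟩⟩
  obtain ⟨i₀, -, hi₀⟩ := Finset.exists_min_image Finset.univ ev ⟨Classical.arbitrary _, Finset.mem_univ _⟩
  have h : ∀ i, ev i₀ ≤ ev i := fun i => hi₀ i (Finset.mem_univ i)
  exact ⟨i₀, le_antisymm (ciInf_le (Set.Finite.bddBelow (Set.finite_range _)) i₀) (le_ciInf h), h⟩

lemma rayleigh_attained {k : ℕ} (hk : 0 < k) {M : Matrix (Fin k) (Fin k) ℝ} (hM : M.IsHermitian) :
    ∃ w : Fin k → ℝ, w ⬝ᵥ w = 1 ∧ w ⬝ᵥ (M *ᵥ w) = ⨅ i, hM.eigenvalues i := by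
  obtain ⟨i₀, hinf, -⟩ := iInf_attained hk hM.eigenvalues
  set w : Fin k → ℝ := ⇑(hM.eigenvectorBasis i₀) with hwdef
  have hnorm : ‖hM.eigenvectorBasis i₀‖ = 1 := hM.eigenvectorBasis.orthonormal.1 i₀
  have hunit : w ⬝ᵥ w = 1 := by
    have h2 : (1:ℝ) = ‖hM.eigenvectorBasis i₀‖ ^ 2 := by rw [hnorm]; norm_num
    have h3 : ‖hM.eigenvectorBasis i₀‖ ^ 2 = w ⬝ᵥ w := by
      rw [← real_inner_self_eq_norm_sq, PiLp.inner_apply]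
      simp only [dotProduct, hwdef, RCLike.inner_apply, conj_trivial, mul_comm]
    rw [← h3, ← h2]
  refine ⟨w, hunit, ?_⟩
  rw [hM.mulVec_eigenvectorBasis i₀]
  rw [dotProduct_smul, ← hwdef]
  simp [hunit, hinf]

lemma quad_continuous {k : ℕ} (M : Matrix (Fin k) (Fin k) ℝ) :
    Continuous fun w : Fin k → ℝ => w ⬝ᵥ (M *ᵥ w) := by
  simp only [dotProduct, Matrix.mulVec]
  exact continuous_finset_sum _ fun i _ => (continuous_apply i).mul
    (continuous_finset_sum _ fun j _ => continuous_const.mul (continuous_apply j))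

lemma dot_continuous {k : ℕ} : Continuous fun w : Fin k → ℝ => w ⬝ᵥ w := by
  simp only [dotProduct]
  exact continuous_finset_sum _ fun i _ => (continuous_apply i).mul (continuous_apply i)

lemma s1_char {k : ℕ} (hk : 0 < k) (M : Matrix (Fin k) (Fin k) ℝ) (hM : M.IsHermitian)
    (D : Set (Fin k → ℝ)) (hD : Dense D) :
    (⨅ i, hM.eigenvalues i)
      = ⨅ w : {w : Fin k → ℝ // w ∈ D ∧ 1/2 < w ⬝ᵥ w},
          ((w : Fin k → ℝ) ⬝ᵥ (M *ᵥ (w : Fin k → ℝ))) / ((w : Fin k → ℝ) ⬝ᵥ (w : Fin k → ℝ)) := by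
  set μs := ⨅ i, hM.eigenvalues i with hμs
  have hlow : ∀ w : {w : Fin k → ℝ // w ∈ D ∧ 1/2 < w ⬝ᵥ w},
      μs ≤ ((w : Fin k → ℝ) ⬝ᵥ (M *ᵥ (w : Fin k → ℝ))) / ((w : Fin k → ℝ) ⬝ᵥ (w : Fin k → ℝ)) := by
    rintro ⟨w, -, hw⟩
    have hpos : (0:ℝ) < w ⬝ᵥ w := lt_trans (by norm_num) hw
    rw [le_div_iff₀ hpos]
    exact quad_lower hM w
  have hbdd : BddBelow (Set.range fun w : {w : Fin k → ℝ // w ∈ D ∧ 1/2 < w ⬝ᵥ w} =>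
      ((w : Fin k → ℝ) ⬝ᵥ (M *ᵥ (w : Fin k → ℝ))) / ((w : Fin k → ℝ) ⬝ᵥ (w : Fin k → ℝ))) := by
    refine ⟨μs, ?_⟩
    rintro r ⟨w, rfl⟩
    exact hlow w
  obtain ⟨w₀, hw₀1, hw₀2⟩ := rayleigh_attained hk hM
  haveI hne : Nonempty {w : Fin k → ℝ // w ∈ D ∧ 1/2 < w ⬝ᵥ w} := by
    obtain ⟨w, hwU, hwD⟩ := hD.inter_open_nonempty {w | 1/2 < w ⬝ᵥ w}
      (isOpen_lt continuous_const dot_continuous) ⟨w₀, by rw [Set.mem_setOf_eq, hw₀1]; norm_num⟩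
    exact ⟨⟨w, hwD, hwU⟩⟩
  refine le_antisymm (le_ciInf hlow) ?_
  refine le_of_forall_pos_le_add fun ε hε => ?_
  set U : Set (Fin k → ℝ) := {w | 1/2 < w ⬝ᵥ w ∧ w ⬝ᵥ (M *ᵥ w) < (μs + ε) * (w ⬝ᵥ w)} with hU
  have hUopen : IsOpen U :=
    (isOpen_lt continuous_const dot_continuous).inter
      (isOpen_lt (quad_continuous M) (continuous_const.mul dot_continuous))
  have hw₀U : w₀ ∈ U := by
    constructor
    · rw [hw₀1]; norm_num
    · rw [hw₀1, hw₀2, mul_one, ← hμs]; linarith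
  obtain ⟨w, hwU, hwD⟩ := hD.inter_open_nonempty U hUopen ⟨w₀, hw₀U⟩
  have hpos : (0:ℝ) < w ⬝ᵥ w := lt_trans (by norm_num) hwU.1
  have : ((w : Fin k → ℝ) ⬝ᵥ (M *ᵥ w)) / (w ⬝ᵥ w) ≤ μs + ε := by
    rw [div_le_iff₀ hpos]
    exact le_of_lt hwU.2
  exact le_trans (ciInf_le hbdd ⟨w, hwD, hwU.1⟩) this

lemma s1_measurable {Ω : Type*} [MeasurableSpace Ω] {n m : ℕ} (hn : 0 < n)
    (γ : Fin n → Ω → ℝ) (hγ : ∀ j, Measurable (γ j)) :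
    Measurable fun x : Fin m → Ω => s1 (dmat γ x) := by
  obtain ⟨D, hDc, hDd⟩ := TopologicalSpace.exists_countable_dense (Fin n → ℝ)
  have heq : (fun x : Fin m → Ω => s1 (dmat γ x))
      = fun x => ⨅ w : {w : Fin n → ℝ // w ∈ D ∧ 1/2 < w ⬝ᵥ w},
          ((w : Fin n → ℝ) ⬝ᵥ (((dmat γ x)ᵀ * dmat γ x) *ᵥ (w : Fin n → ℝ)))
            / ((w : Fin n → ℝ) ⬝ᵥ (w : Fin n → ℝ)) :=
    funext fun x => s1_char hn _ (Matrix.isHermitian_transpose_mul_self (dmat γ x)) D hDd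
  rw [heq]
  haveI : Countable {w : Fin n → ℝ // w ∈ D ∧ 1/2 < w ⬝ᵥ w} :=
    (hDc.mono fun w hw => hw.1 : Set.Countable {w | w ∈ D ∧ 1/2 < w ⬝ᵥ w}).to_subtype
  refine Measurable.iInf fun w => Measurable.div ?_ measurable_const
  have hM : ∀ i j, Measurable fun x : Fin m → Ω => ((dmat γ x)ᵀ * dmat γ x) i j := by
    intro i j
    simp only [Matrix.mul_apply, Matrix.transpose_apply, dmat, Matrix.of_apply]
    exact Finset.measurable_sum _ fun k _ =>
      ((hγ i).comp (measurable_pi_apply k)).mul ((hγ j).comp (measurable_pi_apply k))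
  simp only [dotProduct, Matrix.mulVec]
  exact Finset.measurable_sum _ fun i _ => measurable_const.mul
    (Finset.measurable_sum _ fun j _ => (hM i j).mul measurable_const)

lemma s1_pos {m n : ℕ} (hn : 0 < n) (A : Matrix (Fin m) (Fin n) ℝ)
    (hx : IsUnit (Aᵀ * A).det) : 0 < s1 A := by
  have hM := Matrix.isHermitian_transpose_mul_self A
  obtain ⟨i₀, hinf, hmin⟩ := iInf_attained hn hM.eigenvalues
  rw [s1, hinf]
  have hpsd : Matrix.PosSemidef (Aᵀ * A) := by
    have h := Matrix.posSemidef_conjTranspose_mul_self A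
    rwa [Matrix.conjTranspose_eq_transpose_of_trivial] at h
  have hnn : 0 ≤ hM.eigenvalues i₀ := hpsd.eigenvalues_nonneg i₀
  have hdet : (Aᵀ * A).det ≠ 0 := by
    intro h0
    rw [h0] at hx
    exact (by norm_num : ¬ IsUnit (0:ℝ)) hx
  have hprod : (Aᵀ * A).det = ∏ i, hM.eigenvalues i := by
    simpa using hM.det_eq_prod_eigenvalues
  rw [hprod] at hdet
  have hne : hM.eigenvalues i₀ ≠ 0 := by
    intro h0
    exact hdet (Finset.prod_eq_zero (Finset.mem_univ i₀) h0)
  exact lt_of_le_of_ne hnn (Ne.symm hne)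

lemma s1_nonneg {m n : ℕ} (hn : 0 < n) (A : Matrix (Fin m) (Fin n) ℝ) : 0 ≤ s1 A := by
  have hM := Matrix.isHermitian_transpose_mul_self A
  obtain ⟨i₀, hinf, -⟩ := iInf_attained hn hM.eigenvalues
  rw [s1, hinf]
  have hpsd : Matrix.PosSemidef (Aᵀ * A) := by
    have h := Matrix.posSemidef_conjTranspose_mul_self A
    rwa [Matrix.conjTranspose_eq_transpose_of_trivial] at h
  exact hpsd.eigenvalues_nonneg i₀

lemma proj_bound {k : ℕ} (P : Matrix (Fin k) (Fin k) ℝ) (hPt : Pᵀ = P) (hPP : P * P = P)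
    (v : Fin k → ℝ) : (P *ᵥ v) ⬝ᵥ (P *ᵥ v) ≤ v ⬝ᵥ v := by
  set u := P *ᵥ v with hu
  have hvecmul : u ᵥ* P = u := by
    have h1 : u ᵥ* P = Pᵀ *ᵥ u := by rw [← Matrix.vecMul_transpose, Matrix.transpose_transpose]
    rw [h1, hPt, hu, Matrix.mulVec_mulVec, hPP]
  have huu : u ⬝ᵥ u = u ⬝ᵥ v := by
    conv_lhs => rw [hu, dotProduct_mulVec (P *ᵥ v) P v]
    rw [← hu, hvecmul]
  have hnn : 0 ≤ (v - u) ⬝ᵥ (v - u) := by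
    have : (v - u) ⬝ᵥ (v - u) = ∑ i, (v i - u i) * (v i - u i) := rfl
    rw [this]
    exact Finset.sum_nonneg fun i _ => mul_self_nonneg _
  have hexp : (v - u) ⬝ᵥ (v - u) = v ⬝ᵥ v - v ⬝ᵥ u - u ⬝ᵥ v + u ⬝ᵥ u := by
    rw [sub_dotProduct, dotProduct_sub, dotProduct_sub]
    ring
  have hcomm : v ⬝ᵥ u = u ⬝ᵥ v := dotProduct_comm v u
  rw [huu]
  rw [hexp, huu, hcomm] at hnn
  linarith

lemma pointwise_bound {Ω : Type*} {n m : ℕ} (hn : 0 < n) (γ : Fin n → Ω → ℝ) (f : Ω → ℝ)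
    (a : Fin n → ℝ) (x : Fin m → Ω) (hx : IsUnit ((dmat γ x)ᵀ * dmat γ x).det) :
    enorm2 (betaFn γ f x - a)
      ≤ Real.sqrt ((s1 (dmat γ x))⁻¹) * ∑ i, |resid γ f a (x i)| := by
  set A := dmat γ x with hA
  set M := Aᵀ * A with hM
  set ρv : Fin m → ℝ := fun i => resid γ f a (x i) with hρv
  set w : Fin n → ℝ := betaFn γ f x - a with hw
  -- w = Rmat *ᵥ ρv
  have hρeq : ρv = (fun i => f (x i)) - A *ᵥ a := by
    funext i
    simp only [hρv, resid, Pi.sub_apply, Matrix.mulVec, dotProduct, hA, dmat,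
      Matrix.of_apply]
    congr 1
    exact Finset.sum_congr rfl fun j _ => mul_comm _ _
  have hRA : Rmat γ x * A = 1 := by
    rw [Rmat, Matrix.mul_assoc, ← hA, ← hM]
    exact Matrix.nonsing_inv_mul M hx
  have hweq : w = Rmat γ x *ᵥ ρv := by
    rw [hρeq, Matrix.mulVec_sub, Matrix.mulVec_mulVec, hRA, Matrix.one_mulVec, hw, betaFn]
  -- quad lower bound
  have hquad : s1 A * (w ⬝ᵥ w) ≤ (A *ᵥ w) ⬝ᵥ (A *ᵥ w) := by
    have h := quad_lower (Matrix.isHermitian_transpose_mul_self A) w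
    have h2 : w ⬝ᵥ ((Aᵀ * A) *ᵥ w) = (A *ᵥ w) ⬝ᵥ (A *ᵥ w) := by
      rw [← Matrix.mulVec_mulVec, dotProduct_mulVec, Matrix.vecMul_transpose]
    rw [← h2]
    exact h
  -- projection
  set P := A * Rmat γ x with hP
  have hPeq : P = A * M⁻¹ * Aᵀ := by rw [hP, Rmat, ← hA, ← hM, Matrix.mul_assoc]
  have hMt : Mᵀ = M := by rw [hM, Matrix.transpose_mul, Matrix.transpose_transpose]
  have hPt : Pᵀ = P := by
    rw [hPeq, Matrix.transpose_mul, Matrix.transpose_mul, Matrix.transpose_transpose,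
      Matrix.transpose_nonsing_inv, hMt, ← Matrix.mul_assoc]
  have hPP : P * P = P := by
    rw [hPeq]
    calc A * M⁻¹ * Aᵀ * (A * M⁻¹ * Aᵀ)
        = A * M⁻¹ * (Aᵀ * A) * (M⁻¹ * Aᵀ) := by simp only [Matrix.mul_assoc]
      _ = A * M⁻¹ * M * (M⁻¹ * Aᵀ) := by rw [← hM]
      _ = A * (M⁻¹ * Aᵀ) := by rw [Matrix.nonsing_inv_mul_cancel_right _ _ hx]
      _ = A * M⁻¹ * Aᵀ := by rw [Matrix.mul_assoc]
  have hAw : A *ᵥ w = P *ᵥ ρv := by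
    rw [hweq, Matrix.mulVec_mulVec, hP]
  -- sum bound
  set t : ℝ := ∑ i, |ρv i| with ht
  have htnn : 0 ≤ t := Finset.sum_nonneg fun i _ => abs_nonneg _
  have hvv : ρv ⬝ᵥ ρv ≤ t ^ 2 := by
    have h1 : ρv ⬝ᵥ ρv = ∑ i, |ρv i| ^ 2 := by
      simp only [dotProduct]
      exact Finset.sum_congr rfl fun i _ => by rw [sq_abs, sq]
    rw [h1, ht]
    exact Finset.sum_sq_le_sq_sum_of_nonneg fun i _ => abs_nonneg _
  have hs1 : 0 < s1 A := s1_pos hn A hx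
  have hchain : s1 A * (w ⬝ᵥ w) ≤ t ^ 2 :=
    le_trans hquad (le_trans (by rw [hAw]; exact proj_bound P hPt hPP ρv) hvv)
  have hww : w ⬝ᵥ w ≤ (s1 A)⁻¹ * t ^ 2 := by
    rw [← le_div_iff₀' hs1] at hchain
    rwa [div_eq_inv_mul] at hchain
  have henorm : enorm2 w = Real.sqrt (w ⬝ᵥ w) := by
    rw [enorm2]
    congr 1
    exact Finset.sum_congr rfl fun j _ => (sq (w j)).symm ▸ rfl
  calc enorm2 w = Real.sqrt (w ⬝ᵥ w) := henorm
    _ ≤ Real.sqrt ((s1 A)⁻¹ * t ^ 2) := Real.sqrt_le_sqrt hww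
    _ = Real.sqrt ((s1 A)⁻¹) * t := by
        rw [Real.sqrt_mul (inv_nonneg.mpr hs1.le), Real.sqrt_sq htnn]

lemma measurePreserving_eval_pi {ι : Type*} [Fintype ι] {Ω : Type*} [MeasurableSpace Ω]
    (μ : Measure Ω) [IsProbabilityMeasure μ] (i : ι) :
    MeasurePreserving (fun x : ι → Ω => x i) (Measure.pi fun _ : ι => μ) μ := by
  classical
  refine ⟨measurable_pi_apply i, ?_⟩
  ext s hs
  rw [Measure.map_apply (measurable_pi_apply i) hs]
  have hpre : (fun x : ι → Ω => x i) ⁻¹' s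
      = Set.pi Set.univ (Function.update (fun _ : ι => (Set.univ : Set Ω)) i s) := by
    ext x
    simp [Function.update, Set.mem_pi]
  rw [hpre, Measure.pi_pi]
  rw [Finset.prod_eq_single i (fun b _ hb => by simp [Function.update, hb]) (by simp)]
  simp

set_option maxHeartbeats 1000000 in
/-- Proposition 1, consistency: for `a ∈ ℝⁿ`, `1/p + 1/q = 1`, if the
residue `ρ(a) ∈ L^p(Ω,μ)` and `K_q(Γ) < ∞`, then
`E‖β - a‖₂ ≤ √n ⬝ m ⬝ √(K_q(Γ)) ⬝ ‖ρ(a)‖_{L^p(Ω)}`. -/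
theorem stmt2 {Ω : Type*} [MeasurableSpace Ω] (μ : Measure Ω) [IsProbabilityMeasure μ]
    (n m : ℕ) (hn : 1 ≤ n) (hm : 1 ≤ m)
    (γ : Fin n → Ω → ℝ) (hγ : ∀ j, Measurable (γ j))
    (f : Ω → ℝ) (hf : Measurable f)
    (hinv : ∀ᵐ x ∂(Measure.pi fun _ : Fin m => μ), IsUnit ((dmat γ x)ᵀ * dmat γ x).det)
    (a : Fin n → ℝ)
    (p q : ℝ≥0∞) (hp : 1 ≤ p) (hq : 1 ≤ q) (hpq : 1 / p + 1 / q = 1)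
    (hρ : MemLp (resid γ f a) p μ)
    (hK : eLpNorm (fun x : Fin m → Ω => (s1 (dmat γ x))⁻¹) (q / 2)
        (Measure.pi fun _ : Fin m => μ) < ⊤) :
    ∫⁻ x, ENNReal.ofReal (enorm2 (betaFn γ f x - a)) ∂(Measure.pi fun _ : Fin m => μ)
      ≤ ENNReal.ofReal (Real.sqrt n) * m *
        (eLpNorm (fun x : Fin m → Ω => (s1 (dmat γ x))⁻¹) (q / 2)
          (Measure.pi fun _ : Fin m => μ)) ^ (1 / 2 : ℝ) *
        eLpNorm (resid γ f a) p μ := by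
  classical
  have hn' : 0 < n := hn
  set ν := (Measure.pi fun _ : Fin m => μ) with hν
  set g : (Fin m → Ω) → ℝ := fun x => Real.sqrt ((s1 (dmat γ x))⁻¹) with hg
  set K : ℝ≥0∞ := eLpNorm (fun x : Fin m → Ω => (s1 (dmat γ x))⁻¹) (q / 2) ν with hKdef
  set P : ℝ≥0∞ := eLpNorm (resid γ f a) p μ with hPdef
  have hgmeas : Measurable g :=
    Real.continuous_sqrt.measurable.comp ((s1_measurable hn' γ hγ).inv)
  have hresid_meas : Measurable (resid γ f a) :=
    hf.sub (Finset.measurable_sum Finset.univ fun j _ => measurable_const.mul (hγ j))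
  have hr_i : ∀ i : Fin m, Measurable fun x : Fin m → Ω => resid γ f a (x i) :=
    fun i => hresid_meas.comp (measurable_pi_apply i)
  have hsnorm_i : ∀ i : Fin m,
      eLpNorm (fun x : Fin m → Ω => resid γ f a (x i)) p ν = P := by
    intro i
    have h := eLpNorm_comp_measurePreserving (f := fun x : Fin m → Ω => x i)
      (g := resid γ f a) (p := p) hρ.aestronglyMeasurable (measurePreserving_eval_pi μ i)
    exact h
  have hKnorm : eLpNorm g q ν = K ^ (1/2 : ℝ) := by
    have h1 : g = fun x => ‖(s1 (dmat γ x))⁻¹‖ ^ (1/2 : ℝ) := by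
      funext x
      show Real.sqrt ((s1 (dmat γ x))⁻¹) = ‖(s1 (dmat γ x))⁻¹‖ ^ (1/2 : ℝ)
      rw [Real.norm_eq_abs, abs_of_nonneg (inv_nonneg.mpr (s1_nonneg hn' _)),
        Real.sqrt_eq_rpow]
    have h2 : q * ENNReal.ofReal (1/2 : ℝ) = q / 2 := by
      rw [show ENNReal.ofReal (1/2 : ℝ) = 1/2 by
        rw [ENNReal.ofReal_div_of_pos (by norm_num : (0:ℝ) < 2), ENNReal.ofReal_one,
          ENNReal.ofReal_ofNat]]
      rw [mul_one_div]
    rw [h1, eLpNorm_norm_rpow _ (by norm_num : (0:ℝ) < 1/2), h2, hKdef]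
  have hpqr : (1 : ℝ≥0∞) / 1 = 1/q + 1/p := by
    rw [add_comm (1/q) (1/p), hpq]
    simp
  have hhold : ∀ i : Fin m,
      ∫⁻ x, ENNReal.ofReal (g x) * ENNReal.ofReal |resid γ f a (x i)| ∂ν
        ≤ eLpNorm g q ν * eLpNorm (fun x : Fin m → Ω => resid γ f a (x i)) p ν := by
    intro i
    have heq : ∫⁻ x, ENNReal.ofReal (g x) * ENNReal.ofReal |resid γ f a (x i)| ∂ν
        = eLpNorm (g • fun x : Fin m → Ω => resid γ f a (x i)) 1 ν := by
      rw [eLpNorm_one_eq_lintegral_enorm]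
      congr 1
      funext xx
      rw [Pi.smul_apply', smul_eq_mul, ← ofReal_norm, Real.norm_eq_abs,
        abs_mul, abs_of_nonneg (Real.sqrt_nonneg _),
        ENNReal.ofReal_mul (Real.sqrt_nonneg _)]
    rw [heq]
    exact eLpNorm_smul_le_mul_eLpNorm (hr_i i).aestronglyMeasurable
      hgmeas.aestronglyMeasurable (hpqr := ⟨by simpa [one_div] using hpqr.symm⟩)
  calc ∫⁻ x, ENNReal.ofReal (enorm2 (betaFn γ f x - a)) ∂ν
      ≤ ∫⁻ x, ∑ i, ENNReal.ofReal (g x) * ENNReal.ofReal |resid γ f a (x i)| ∂ν := by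
        refine lintegral_mono_ae ?_
        filter_upwards [hinv] with x hx
        calc ENNReal.ofReal (enorm2 (betaFn γ f x - a))
            ≤ ENNReal.ofReal (g x * ∑ i, |resid γ f a (x i)|) :=
              ENNReal.ofReal_le_ofReal (pointwise_bound hn' γ f a x hx)
          _ = ∑ i, ENNReal.ofReal (g x) * ENNReal.ofReal |resid γ f a (x i)| := by
              rw [ENNReal.ofReal_mul (Real.sqrt_nonneg _),
                ENNReal.ofReal_sum_of_nonneg (fun i _ => abs_nonneg _), Finset.mul_sum]
    _ = ∑ i : Fin m, ∫⁻ x, ENNReal.ofReal (g x) * ENNReal.ofReal |resid γ f a (x i)| ∂ν :=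
        lintegral_finset_sum _ fun i _ =>
          (hgmeas.ennreal_ofReal).mul ((hr_i i).abs.ennreal_ofReal)
    _ ≤ ∑ i : Fin m, eLpNorm g q ν * eLpNorm (fun x : Fin m → Ω => resid γ f a (x i)) p ν :=
        Finset.sum_le_sum fun i _ => hhold i
    _ = ∑ _i : Fin m, K ^ (1/2 : ℝ) * P := by
        refine Finset.sum_congr rfl fun i _ => ?_
        rw [hKnorm, hsnorm_i i]
    _ = (m : ℝ≥0∞) * (K ^ (1/2 : ℝ) * P) := by
        rw [Finset.sum_const, Finset.card_univ, Fintype.card_fin, nsmul_eq_mul]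
    _ ≤ ENNReal.ofReal (Real.sqrt n) * m * K ^ (1/2 : ℝ) * P := by
        have h1 : (1:ℝ≥0∞) ≤ ENNReal.ofReal (Real.sqrt n) := by
          rw [← ENNReal.ofReal_one]
          exact ENNReal.ofReal_le_ofReal (Real.one_le_sqrt.mpr (by exact_mod_cast hn))
        calc (m : ℝ≥0∞) * (K ^ (1/2 : ℝ) * P) = 1 * ((m : ℝ≥0∞) * K ^ (1/2 : ℝ) * P) := by ring
          _ ≤ ENNReal.ofReal (Real.sqrt n) * ((m : ℝ≥0∞) * K ^ (1/2 : ℝ) * P) :=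
              mul_le_mul_left h1 _
          _ = ENNReal.ofReal (Real.sqrt n) * m * K ^ (1/2 : ℝ) * P := by ring
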